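/- arXiv:2207.13203 — 4 statements merged into one kernel-verified Lean document; each statement's English description precedes it below -/
import Mathlib

section
/- Let $p > 3$ be prime, $p = 12k + 1 + 4a + 6b$ with $a,b \in \{0,1\}$, $M = (p^2-1)/12 - k$. Consider the abelian group $G$ generated by symbols $V_0, V_1, \bar{Z}_0, \bar{Z}_1, \bar{E}, \bar{F}$ subject to the relations $V_0 = M\bar{Z}_0 - k\bar{Z}_1 - b\bar{E} - a\bar{F}$, $V_1 = -k\bar{Z}_0 + \bar{Z}_1 - \bar{E} - \bar{F}$, $b\bar{Z}_0 + \bar{Z}_1 - 2\bar{E} = 0$, and $a\bar{Z}_0 + \bar{Z}_1 - 3\bar{F} = 0$. Then $G$ is free abelian of rank $2$, with an isomorphism $G \cong \mathbb{Z}^2$ given by $\bar{Z}_0 \mapsto (1,0)$, $\bar{Z}_1 \mapsto (2a-3b, 6)$, $\bar{E} \mapsto (a-b, 3)$, $\bar{F} \mapsto (a-b, 2)$, $V_0 \mapsto (M - (2k+1)a + (3k+1)b, -6k-2a-3b)$, $V_1 \mapsto (-k-b, 1)$. -/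
open FreeAbelianGroup

/-- Free abelian group on the six generators `V₀, V₁, Z̄₀, Z̄₁, Ē, F̄`
(indexed by `0, 1, 2, 3, 4, 5`). -/
abbrev X4 : Type := FreeAbelianGroup (Fin 6)

/-- The relations defining the component group of the generalized Jacobian of `X₀(p²)`
with modulus the sum of all cusps. -/
def rels4 (k a b M : ℤ) : Set X4 :=
  { of 0 - (M • of 2 - k • of 3 - b • of 4 - a • of 5),
    of 1 - (-(k • of 2) + of 3 - of 4 - of 5),
    b • of 2 + of 3 - (2 : ℤ) • of 4,
    a • of 2 + of 3 - (3 : ℤ) • of 5 }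

lemma comb_mem (S : Set X4) (r1 r2 r3 r4 : X4) (h1 : r1 ∈ S) (h2 : r2 ∈ S)
    (h3 : r3 ∈ S) (h4 : r4 ∈ S) (c1 c2 c3 c4 : ℤ) :
    c1 • r1 + c2 • r2 + c3 • r3 + c4 • r4 ∈ AddSubgroup.closure S :=
  add_mem (add_mem (add_mem (AddSubgroup.zsmul_mem _ (AddSubgroup.subset_closure h1) _)
    (AddSubgroup.zsmul_mem _ (AddSubgroup.subset_closure h2) _))
    (AddSubgroup.zsmul_mem _ (AddSubgroup.subset_closure h3) _))
    (AddSubgroup.zsmul_mem _ (AddSubgroup.subset_closure h4) _)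

/-- The group presented by generators `V₀, V₁, Z̄₀, Z̄₁, Ē, F̄` and the relations
coming from the intersection matrix of the minimal regular model of `X₀(p²)` is free
abelian of rank 2, via the explicit isomorphism sending `Z̄₀ ↦ (1,0)`,
`Z̄₁ ↦ (2a-3b,6)`, `Ē ↦ (a-b,3)`, `F̄ ↦ (a-b,2)`,
`V₀ ↦ (M-(2k+1)a+(3k+1)b, -6k-2a-3b)`, `V₁ ↦ (-k-b,1)`. -/
theorem statement_4 (p k a b M : ℤ) (hp : Prime p) (h3 : 3 < p)
    (ha : a = 0 ∨ a = 1) (hb : b = 0 ∨ b = 1)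
    (hpk : p = 12 * k + 1 + 4 * a + 6 * b)
    (hM : M = (p ^ 2 - 1) / 12 - k) :
    ∃ e : (X4 ⧸ AddSubgroup.closure (rels4 k a b M)) ≃+ ℤ × ℤ,
      e (QuotientAddGroup.mk (of 2)) = (1, 0) ∧
      e (QuotientAddGroup.mk (of 3)) = (2 * a - 3 * b, 6) ∧
      e (QuotientAddGroup.mk (of 4)) = (a - b, 3) ∧
      e (QuotientAddGroup.mk (of 5)) = (a - b, 2) ∧
      e (QuotientAddGroup.mk (of 0)) =
        (M - (2 * k + 1) * a + (3 * k + 1) * b, -6 * k - 2 * a - 3 * b) ∧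
      e (QuotientAddGroup.mk (of 1)) = (-k - b, 1) := by 
  have haa : a * a = a := by rcases ha with rfl | rfl <;> ring
  have hbb : b * b = b := by rcases hb with rfl | rfl <;> ring
  set r1 : X4 := of 0 - (M • of 2 - k • of 3 - b • of 4 - a • of 5) with hr1
  set r2 : X4 := of 1 - (-(k • of 2) + of 3 - of 4 - of 5) with hr2
  set r3 : X4 := b • of 2 + of 3 - (2 : ℤ) • of 4 with hr3
  set r4 : X4 := a • of 2 + of 3 - (3 : ℤ) • of 5 with hr4
  have hm1 : r1 ∈ rels4 k a b M := Set.mem_insert _ _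
  have hm2 : r2 ∈ rels4 k a b M := Set.mem_insert_of_mem _ (Set.mem_insert _ _)
  have hm3 : r3 ∈ rels4 k a b M :=
    Set.mem_insert_of_mem _ (Set.mem_insert_of_mem _ (Set.mem_insert _ _))
  have hm4 : r4 ∈ rels4 k a b M :=
    Set.mem_insert_of_mem _ (Set.mem_insert_of_mem _ (Set.mem_insert_of_mem _ rfl))
  set f : Fin 6 → ℤ × ℤ := ![(M - (2*k+1)*a + (3*k+1)*b, -6*k-2*a-3*b), (-k-b, 1),
    (1, 0), (2*a-3*b, 6), (a-b, 3), (a-b, 2)] with hf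
  set φ : X4 →+ ℤ × ℤ := FreeAbelianGroup.lift f with hφ
  have hφ0 : φ (of 0) = (M - (2*k+1)*a + (3*k+1)*b, -6*k-2*a-3*b) := (lift_apply_of f 0).trans rfl
  have hφ1 : φ (of 1) = (-k-b, 1) := (lift_apply_of f 1).trans rfl
  have hφ2 : φ (of 2) = (1, 0) := (lift_apply_of f 2).trans rfl
  have hφ3 : φ (of 3) = (2*a-3*b, 6) := (lift_apply_of f 3).trans rfl
  have hφ4 : φ (of 4) = (a-b, 3) := (lift_apply_of f 4).trans rfl
  have hφ5 : φ (of 5) = (a-b, 2) := (lift_apply_of f 5).trans rfl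
  have hker : AddSubgroup.closure (rels4 k a b M) ≤ φ.ker := by
    rw [AddSubgroup.closure_le]
    intro x hx
    simp only [rels4, Set.mem_insert_iff, Set.mem_singleton_iff] at hx
    rcases hx with rfl | rfl | rfl | rfl <;>
      · simp only [AddMonoidHom.mem_ker, SetLike.mem_coe, map_sub, map_add, map_zsmul, map_neg,
          hφ0, hφ1, hφ2, hφ3, hφ4, hφ5, Prod.ext_iff, Prod.smul_mk, smul_eq_mul,
          Prod.mk_add_mk, Prod.mk_sub_mk, Prod.neg_mk, Prod.fst_zero, Prod.snd_zero,
          Prod.fst_sub, Prod.snd_sub, Prod.fst_add, Prod.snd_add, Prod.fst_neg, Prod.snd_neg]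
        constructor <;>
          first
            | ring1
            | linear_combination haa - hbb
            | linear_combination hbb - haa
  set φ' : (X4 ⧸ AddSubgroup.closure (rels4 k a b M)) →+ ℤ × ℤ := QuotientAddGroup.lift _ φ hker with hφ'
  set g1 : (X4 ⧸ AddSubgroup.closure (rels4 k a b M)) := QuotientAddGroup.mk (of 2) with hg1
  set g2 : (X4 ⧸ AddSubgroup.closure (rels4 k a b M)) := (QuotientAddGroup.mk (of 4) : (X4 ⧸ AddSubgroup.closure (rels4 k a b M))) - QuotientAddGroup.mk (of 5) with hg2
  set ψ : ℤ × ℤ →+ (X4 ⧸ AddSubgroup.closure (rels4 k a b M)) := AddMonoidHom.coprod ((zmultiplesHom (X4 ⧸ AddSubgroup.closure (rels4 k a b M))) g1) ((zmultiplesHom (X4 ⧸ AddSubgroup.closure (rels4 k a b M))) g2) with hψ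
  have hmkeq : ∀ (x y : ℤ) (i : Fin 6) (c1 c2 c3 c4 : ℤ),
      -(x • of 2 + y • (of 4 - of 5)) + of i = c1 • r1 + c2 • r2 + c3 • r3 + c4 • r4 →
      ψ (x, y) = QuotientAddGroup.mk (of i) := by
    intro x y i c1 c2 c3 c4 heq
    have : ψ (x, y) = x • g1 + y • g2 := by
      simp [hψ, AddMonoidHom.coprod_apply]
    rw [this, hg1, hg2, ← QuotientAddGroup.mk_sub, ← QuotientAddGroup.mk_zsmul,
      ← QuotientAddGroup.mk_zsmul, ← QuotientAddGroup.mk_add, QuotientAddGroup.eq, heq]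
    exact comb_mem _ r1 r2 r3 r4 hm1 hm2 hm3 hm4 c1 c2 c3 c4
  have key : ∀ i : Fin 6, ψ (φ (of i)) = QuotientAddGroup.mk (of i) := by
    intro i
    fin_cases i
    · show ψ (φ (of 0)) = QuotientAddGroup.mk (of 0)
      rw [hφ0]
      refine hmkeq _ _ _ 1 0 (-3*k-a-b) (2*k+a+b) ?_
      rw [hr1, hr2, hr3, hr4]
      match_scalars <;>
        first
          | ring1
          | linear_combination haa - hbb
          | linear_combination hbb - haa
    · show ψ (φ (of 1)) = QuotientAddGroup.mk (of 1)
      rw [hφ1]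
      refine hmkeq _ _ _ 0 1 1 0 ?_
      rw [hr1, hr2, hr3, hr4]; match_scalars <;> ring1
    · show ψ (φ (of 2)) = QuotientAddGroup.mk (of 2)
      rw [hφ2]
      refine hmkeq _ _ _ 0 0 0 0 ?_
      rw [hr1, hr2, hr3, hr4]; match_scalars <;> ring1
    · show ψ (φ (of 3)) = QuotientAddGroup.mk (of 3)
      rw [hφ3]
      refine hmkeq _ _ _ 0 0 3 (-2) ?_
      rw [hr1, hr2, hr3, hr4]; match_scalars <;> ring1
    · show ψ (φ (of 4)) = QuotientAddGroup.mk (of 4)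
      rw [hφ4]
      refine hmkeq _ _ _ 0 0 1 (-1) ?_
      rw [hr1, hr2, hr3, hr4]; match_scalars <;> ring1
    · show ψ (φ (of 5)) = QuotientAddGroup.mk (of 5)
      rw [hφ5]
      refine hmkeq _ _ _ 0 0 1 (-1) ?_
      rw [hr1, hr2, hr3, hr4]; match_scalars <;> ring1
  have hleft : ψ.comp φ' = AddMonoidHom.id (X4 ⧸ AddSubgroup.closure (rels4 k a b M)) := by
    have : (ψ.comp φ').comp (QuotientAddGroup.mk' _) =
        (AddMonoidHom.id (X4 ⧸ AddSubgroup.closure (rels4 k a b M))).comp (QuotientAddGroup.mk' _) := by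
      ext i
      simpa [hφ'] using key i
    exact QuotientAddGroup.addMonoidHom_ext _ this
  have hright : φ'.comp ψ = AddMonoidHom.id (ℤ × ℤ) := by
    ext x
    · simp only [hψ, hφ', AddMonoidHom.comp_apply, AddMonoidHom.coprod_apply,
        zmultiplesHom_apply, AddMonoidHom.id_apply, map_add, map_zsmul, hg1, hg2, map_sub,
        QuotientAddGroup.lift_mk, QuotientAddGroup.lift_mk', QuotientAddGroup.lift_quot_mk, hφ2, hφ4, hφ5, Prod.smul_mk, smul_eq_mul, Prod.mk_add_mk,
        Prod.mk_sub_mk, Prod.fst_add, Prod.fst_sub, Prod.smul_fst, Prod.smul_snd]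
      ring
    · simp only [hψ, hφ', AddMonoidHom.comp_apply, AddMonoidHom.coprod_apply,
        zmultiplesHom_apply, AddMonoidHom.id_apply, map_add, map_zsmul, hg1, hg2, map_sub,
        QuotientAddGroup.lift_mk, QuotientAddGroup.lift_mk', QuotientAddGroup.lift_quot_mk, hφ2, hφ4, hφ5, Prod.smul_mk, smul_eq_mul, Prod.mk_add_mk,
        Prod.mk_sub_mk, Prod.snd_add, Prod.snd_sub, Prod.smul_fst, Prod.smul_snd]
      ring
  refine ⟨AddMonoidHom.toAddEquiv φ' ψ hleft hright, ?_, ?_, ?_, ?_, ?_, ?_⟩ <;>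
    simp [AddMonoidHom.toAddEquiv, hφ', hg1, hg2, QuotientAddGroup.lift_mk, QuotientAddGroup.lift_mk', QuotientAddGroup.lift_quot_mk, hφ0, hφ1, hφ2, hφ3, hφ4, hφ5]
end

section
/- Let $n \geq 1$, $\epsilon_2, \epsilon_3 \geq 0$ be integers with $6n - 3\epsilon_2 - 4\epsilon_3 > 0$. Let $G = \mathbb{Z} \oplus (\mathbb{Z}/2\mathbb{Z})^{\max(\epsilon_2-1,0)} \oplus (\mathbb{Z}/3\mathbb{Z})^{\max(\epsilon_3-1,0)}$ and let $v \in G$ be the element whose $\mathbb{Z}$-coordinate is $n$ if $\epsilon_2 = \epsilon_3 = 0$, $2n - \epsilon_2$ if $\epsilon_2 > 0, \epsilon_3 = 0$, $3n - 2\epsilon_3$ if $\epsilon_2 = 0, \epsilon_3 > 0$, and $6n - 3\epsilon_2 - 4\epsilon_3$ otherwise, and all of whose torsion coordinates equal $1$. Then $G/\langle v \rangle \cong \mathbb{Z}/P\mathbb{Z} \oplus (\mathbb{Z}/2\mathbb{Z})^{\max(\epsilon_2-2,0)} \oplus (\mathbb{Z}/3\mathbb{Z})^{\max(\epsilon_3-2,0)}$,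 where $P = 2^{\min(\epsilon_2,2)} 3^{\min(\epsilon_3,2)}(n - \epsilon_2/2 - 2\epsilon_3/3)$. -/
/-- The ambient group `ℤ ⊕ (ℤ/2)^{max(ε₂-1,0)} ⊕ (ℤ/3)^{max(ε₃-1,0)}`. -/
abbrev G6 (e2 e3 : ℕ) : Type := ℤ × (Fin (e2 - 1) → ZMod 2) × (Fin (e3 - 1) → ZMod 3)

/-- The `ℤ`-coordinate of the distinguished element `v`. -/
def zcoord (n e2 e3 : ℕ) : ℤ :=
  if e2 = 0 ∧ e3 = 0 then (n : ℤ)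
  else if 0 < e2 ∧ e3 = 0 then 2 * n - e2
  else if e2 = 0 ∧ 0 < e3 then 3 * n - 2 * e3
  else 6 * n - 3 * e2 - 4 * e3

/-- The distinguished element `v`, with all torsion coordinates equal to `1`. -/
def v6 (n e2 e3 : ℕ) : G6 e2 e3 := (zcoord n e2 e3, fun _ => 1, fun _ => 1)

open AddSubgroup

/-- Transport a quotient by `zmultiples` along an `AddEquiv`. -/
def quotZMultiplesCongr {A B : Type*} [AddCommGroup A] [AddCommGroup B]
    (e : A ≃+ B) (v : A) :
    (A ⧸ zmultiples v) ≃+ (B ⧸ zmultiples (e v)) := by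
  refine QuotientAddGroup.congr _ _ e ?_
  ext b
  simp only [AddSubgroup.mem_map, mem_zmultiples_iff]
  constructor
  · rintro ⟨a, ⟨k, rfl⟩, rfl⟩
    exact ⟨k, (map_zsmul e _ _).symm⟩
  · rintro ⟨k, rfl⟩
    exact ⟨k • v, ⟨k, rfl⟩, map_zsmul e _ _⟩

/-- Quotient of a product by `⟨(v,0)⟩` splits off the second factor. -/
lemma quotProd {A B : Type*} [AddCommGroup A] [AddCommGroup B] (v : A) :
    Nonempty (((A × B) ⧸ zmultiples ((v, 0) : A × B)) ≃+ (A ⧸ zmultiples v) × B) := by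
  classical
  let φ : A × B →+ (A ⧸ zmultiples v) × B :=
    (QuotientAddGroup.mk' (zmultiples v)).prodMap (AddMonoidHom.id B)
  have hker : φ.ker = zmultiples ((v, 0) : A × B) := by
    ext ⟨a, b⟩
    rw [AddMonoidHom.mem_ker, mem_zmultiples_iff]
    constructor
    · intro h
      have ha : QuotientAddGroup.mk' (zmultiples v) a = 0 := congrArg Prod.fst h
      have hb : b = 0 := congrArg Prod.snd h
      obtain ⟨k, hk⟩ := mem_zmultiples_iff.mp ((QuotientAddGroup.eq_zero_iff a).mp ha)
      refine ⟨k, ?_⟩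
      rw [hb]
      show (k • v, k • (0 : B)) = (a, 0)
      rw [hk, smul_zero]
    · rintro ⟨k, hk⟩
      have ha : k • v = a := congrArg Prod.fst hk
      have hb : k • (0 : B) = b := congrArg Prod.snd hk
      have h0 : QuotientAddGroup.mk' (zmultiples v) a = 0 :=
        (QuotientAddGroup.eq_zero_iff a).mpr (mem_zmultiples_iff.mpr ⟨k, ha⟩)
      show (QuotientAddGroup.mk' (zmultiples v) a, b) = 0
      rw [h0, ← hb, smul_zero]
      rfl
  have hsurj : Function.Surjective φ :=
    (QuotientAddGroup.mk'_surjective _).prodMap Function.surjective_id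
  rw [← hker]
  exact ⟨QuotientAddGroup.quotientKerEquivOfSurjective φ hsurj⟩

/-- `(ℤ × ZMod M) / ⟨(z, 1)⟩ ≃ ZMod (M * |z|)`. -/
lemma quotIntZMod (M : ℕ) (z : ℤ) :
    Nonempty (((ℤ × ZMod M) ⧸ zmultiples ((z, 1) : ℤ × ZMod M)) ≃+ ZMod (M * z.natAbs)) := by
  set N : ℕ := M * z.natAbs with hN
  have hNabs : ((M : ℤ) * z).natAbs = N := by
    rw [hN, Int.natAbs_mul]; simp
  have hNdvd : (N : ℤ) ∣ (M : ℤ) * z := by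
    rw [← hNabs]; exact Int.natAbs_dvd.mpr dvd_rfl
  have hg : ((z * ((M : ℤ) - 1)) • Int.castAddHom (ZMod N)) (M : ℤ) = 0 := by
    simp only [AddMonoidHom.smul_apply, Int.coe_castAddHom, zsmul_eq_mul]
    rw [← Int.cast_mul, ZMod.intCast_zmod_eq_zero_iff_dvd]
    have h2 : z * ((M : ℤ) - 1) * (M : ℤ) = ((M : ℤ) * z) * ((M : ℤ) - 1) := by ring
    rw [h2]
    exact hNdvd.mul_right _
  let φ : ℤ × ZMod M →+ ZMod N :=
    (Int.castAddHom (ZMod N)).coprod (ZMod.lift M ⟨_, hg⟩)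
  have hφ : ∀ (x w : ℤ), φ (x, (w : ZMod M)) = ((x + z * ((M : ℤ) - 1) * w : ℤ) : ZMod N) := by
    intro x w
    simp only [φ, AddMonoidHom.coprod_apply, Int.coe_castAddHom, ZMod.lift_coe,
      AddMonoidHom.smul_apply, zsmul_eq_mul]
    push_cast
    ring
  have hker : φ.ker = zmultiples ((z, 1) : ℤ × ZMod M) := by
    ext ⟨x, y⟩
    obtain ⟨w, rfl⟩ := ZMod.intCast_surjective y
    rw [AddMonoidHom.mem_ker, hφ, ZMod.intCast_zmod_eq_zero_iff_dvd, mem_zmultiples_iff]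
    constructor
    · intro hdvd
      have hdvd' : ((M : ℤ) * z) ∣ (x + z * ((M : ℤ) - 1) * w) := by
        rw [← Int.natAbs_dvd, hNabs]; exact hdvd
      obtain ⟨K, hK⟩ := hdvd'
      refine ⟨w + M * (K - w), ?_⟩
      have hx : x = z * (w + (M : ℤ) * (K - w)) := by linear_combination hK
      have hyy : (((w + (M : ℤ) * (K - w)) : ℤ) : ZMod M) = (w : ZMod M) := by
        push_cast
        simp
      show ((w + (M : ℤ) * (K - w)) • z, (w + (M : ℤ) * (K - w)) • (1 : ZMod M)) = (x, (w : ZMod M))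
      rw [smul_eq_mul, zsmul_eq_mul, mul_one, hyy, mul_comm, ← hx]
    · rintro ⟨k, hk⟩
      have h1 : k • z = x := congrArg Prod.fst hk
      have h2 : k • (1 : ZMod M) = (w : ZMod M) := congrArg Prod.snd hk
      rw [smul_eq_mul] at h1
      rw [zsmul_eq_mul, mul_one] at h2
      have h3 : ((w - k : ℤ) : ZMod M) = 0 := by push_cast [h2]; ring
      obtain ⟨t, ht⟩ := (ZMod.intCast_zmod_eq_zero_iff_dvd _ _).mp h3
      have hb : x + z * ((M : ℤ) - 1) * w = ((M : ℤ) * z) * (k + ((M : ℤ) - 1) * t) := by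
        have hw : (w : ℤ) = k + (M : ℤ) * t := by linarith
        rw [← h1, hw]; ring
      rw [hb]
      exact hNdvd.mul_right _
  rw [← hker]
  refine ⟨QuotientAddGroup.quotientKerEquivOfSurjective φ ?_⟩
  intro c
  obtain ⟨x, rfl⟩ := ZMod.intCast_surjective c
  exact ⟨(x, 0), by simp [φ]⟩

/-- Shuffle the factors. -/
def shuffle (m2 m3 : ℕ) (A B : Type*) [AddCommGroup A] [AddCommGroup B] :
    (ℤ × (ZMod m2 × A) × (ZMod m3 × B)) ≃+ ((ℤ × (ZMod m2 × ZMod m3)) × (A × B)) where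
  toFun p := ((p.1, (p.2.1.1, p.2.2.1)), (p.2.1.2, p.2.2.2))
  invFun q := (q.1.1, (q.1.2.1, q.2.1), (q.1.2.2, q.2.2))
  left_inv _ := rfl
  right_inv _ := rfl
  map_add' _ _ := rfl

/-- The core computation. -/
lemma core (m2 m3 : ℕ) (hco : Nat.Coprime m2 m3) (z : ℤ)
    (A B : Type*) [AddCommGroup A] [AddCommGroup B] :
    Nonempty (((ℤ × (ZMod m2 × A) × (ZMod m3 × B)) ⧸
        zmultiples ((z, (1, 0), (1, 0)) : ℤ × (ZMod m2 × A) × (ZMod m3 × B)))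
      ≃+ ZMod (m2 * m3 * z.natAbs) × A × B) := by
  classical
  let crt : (ZMod m2 × ZMod m3) ≃+ ZMod (m2 * m3) :=
    (ZMod.chineseRemainder hco).symm.toAddEquiv
  have hcrt : crt (1, 1) = 1 := by
    have : ((1, 1) : ZMod m2 × ZMod m3) = 1 := rfl
    rw [this]
    exact map_one (ZMod.chineseRemainder hco).symm
  let e : (ℤ × (ZMod m2 × A) × (ZMod m3 × B)) ≃+ ((ℤ × ZMod (m2 * m3)) × (A × B)) :=
    (shuffle m2 m3 A B).trans
      (((AddEquiv.refl ℤ).prodCongr crt).prodCongr (AddEquiv.refl (A × B)))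
  have hev : e (z, (1, 0), (1, 0)) = (((z, 1) : ℤ × ZMod (m2 * m3)), (0, 0)) := by
    show ((z, crt (1, 1)), ((0 : A), (0 : B))) = ((z, 1), (0, 0))
    rw [hcrt]
  have q1 := quotZMultiplesCongr e (z, (1, 0), (1, 0))
  rw [hev] at q1
  have h0 : ((((z, 1) : ℤ × ZMod (m2 * m3)), ((0 : A), (0 : B)))
      : (ℤ × ZMod (m2 * m3)) × (A × B)) = (((z, 1) : ℤ × ZMod (m2 * m3)), 0) := rfl
  rw [h0] at q1
  obtain ⟨q2⟩ := quotProd ((z, 1) : ℤ × ZMod (m2 * m3)) (B := A × B)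
  obtain ⟨q3⟩ := quotIntZMod (m2 * m3) z
  exact ⟨q1.trans (q2.trans (q3.prodCongr (AddEquiv.refl (A × B))))⟩

/-- Splitting off one coordinate of `(Fin (a+1) → ZMod k)`, normalizing the all-ones vector. -/
def splitEquiv (k a : ℕ) : (Fin (a + 1) → ZMod k) ≃+ ZMod k × (Fin a → ZMod k) where
  toFun f := (f 0, fun i => f i.succ - f 0)
  invFun c := Fin.cons c.1 (fun i => c.2 i + c.1)
  left_inv f := by
    funext i
    induction i using Fin.cases <;> simp
  right_inv c := by
    refine Prod.ext ?_ ?_ <;> simp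
  map_add' f g := by
    refine Prod.ext rfl ?_
    funext i
    show (f + g) i.succ - (f + g) 0 = (f i.succ - f 0) + (g i.succ - g 0)
    simp [Pi.add_apply]
    abel

lemma splitEquiv_ones (k a : ℕ) : splitEquiv k a (fun _ => 1) = (1, 0) := by
  refine Prod.ext rfl ?_
  funext i
  show (1 : ZMod k) - 1 = 0
  simp

/-- An `AddEquiv` between subsingleton groups. -/
def trivEquiv (A B : Type*) [AddCommGroup A] [AddCommGroup B]
    [Subsingleton A] [Subsingleton B] : A ≃+ B where
  toFun _ := 0
  invFun _ := 0
  left_inv _ := Subsingleton.elim _ _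
  right_inv _ := Subsingleton.elim _ _
  map_add' _ _ := Subsingleton.elim _ _


/-- Assembly lemma. -/
lemma assemble (e2 e3 : ℕ) (P z : ℤ) (m2 m3 : ℕ) (hco : Nat.Coprime m2 m3)
    (hPz : P.natAbs = m2 * m3 * z.natAbs)
    (E2 : (Fin (e2 - 1) → ZMod 2) ≃+ ZMod m2 × (Fin (e2 - 2) → ZMod 2))
    (hE2 : E2 (fun _ => 1) = (1, 0))
    (E3 : (Fin (e3 - 1) → ZMod 3) ≃+ ZMod m3 × (Fin (e3 - 2) → ZMod 3))
    (hE3 : E3 (fun _ => 1) = (1, 0)) :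
    Nonempty ((G6 e2 e3 ⧸ zmultiples ((z, fun _ => 1, fun _ => 1) : G6 e2 e3)) ≃+
      ZMod P.natAbs × (Fin (e2 - 2) → ZMod 2) × (Fin (e3 - 2) → ZMod 3)) := by
  rw [hPz]
  let e := (AddEquiv.refl ℤ).prodCongr (E2.prodCongr E3)
  have q1 := quotZMultiplesCongr e ((z, fun _ => 1, fun _ => 1) : G6 e2 e3)
  have hv : e ((z, fun _ => 1, fun _ => 1) : G6 e2 e3) = (z, (1, 0), (1, 0)) := by
    show (z, (E2 fun _ => 1, E3 fun _ => 1)) = (z, (1, 0), (1, 0))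
    rw [hE2, hE3]
  rw [hv] at q1
  obtain ⟨q2⟩ := core m2 m3 hco z (Fin (e2 - 2) → ZMod 2) (Fin (e3 - 2) → ZMod 3)
  exact ⟨q1.trans q2⟩

lemma finIsEmpty {m : ℕ} (h : m = 0) : IsEmpty (Fin m) := by subst h; infer_instance

/-- Mazur–Rapoport/Edixhoven: the quotient of
`ℤ ⊕ (ℤ/2)^{max(ε₂-1,0)} ⊕ (ℤ/3)^{max(ε₃-1,0)}` by the subgroup generated by `v` is
`ℤ/P ⊕ (ℤ/2)^{max(ε₂-2,0)} ⊕ (ℤ/3)^{max(ε₃-2,0)}`, where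
`P = 2^{min(ε₂,2)} 3^{min(ε₃,2)} (n - ε₂/2 - 2ε₃/3)`. -/
theorem statement_6 (n e2 e3 : ℕ) (hn : 1 ≤ n)
    (hpos : 0 < 6 * (n : ℤ) - 3 * e2 - 4 * e3)
    (P : ℤ) (hP : 6 * P = 2 ^ (min e2 2) * 3 ^ (min e3 2) * (6 * (n : ℤ) - 3 * e2 - 4 * e3)) :
    Nonempty ((G6 e2 e3 ⧸ AddSubgroup.zmultiples (v6 n e2 e3)) ≃+
      ZMod P.natAbs × (Fin (e2 - 2) → ZMod 2) × (Fin (e3 - 2) → ZMod 3)) := by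
  simp only [v6]
  obtain _|_|a2 := e2 <;> obtain _|_|a3 := e3
  -- e2 = 0, e3 = 0
  · haveI := finIsEmpty (show (0:ℕ) - 1 = 0 from rfl)
    refine assemble 0 0 P (zcoord n 0 0) 1 1 (by norm_num) ?_
      (trivEquiv _ _) (Subsingleton.elim _ _) (trivEquiv _ _) (Subsingleton.elim _ _)
    have hz : zcoord n 0 0 = (n : ℤ) := by simp [zcoord]
    rw [hz]
    norm_num at hP ⊢
    omega
  -- e2 = 0, e3 = 1
  · haveI := finIsEmpty (show (0:ℕ) - 1 = 0 from rfl)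
    haveI := finIsEmpty (show (1:ℕ) - 1 = 0 from rfl)
    refine assemble 0 1 P (zcoord n 0 1) 1 1 (by norm_num) ?_
      (trivEquiv _ _) (Subsingleton.elim _ _) (trivEquiv _ _) (Subsingleton.elim _ _)
    have hz : zcoord n 0 1 = 3 * (n : ℤ) - 2 := by norm_num [zcoord]
    rw [hz]
    norm_num at hP ⊢
    omega
  -- e2 = 0, e3 = a3 + 2
  · haveI := finIsEmpty (show (0:ℕ) - 1 = 0 from rfl)
    refine assemble 0 (a3 + 2) P (zcoord n 0 (a3 + 2)) 1 3 (by norm_num) ?_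
      (trivEquiv _ _) (Subsingleton.elim _ _) (splitEquiv 3 a3) (splitEquiv_ones 3 a3)
    have hz : zcoord n 0 (a3 + 2) = 3 * (n : ℤ) - 2 * (a3 + 2 : ℕ) := by
      norm_num [zcoord]
    rw [hz]
    rw [show min (a3 + 2) 2 = 2 by omega] at hP
    norm_num at hP ⊢
    omega
  -- e2 = 1, e3 = 0
  · haveI := finIsEmpty (show (1:ℕ) - 1 = 0 from rfl)
    haveI := finIsEmpty (show (0:ℕ) - 1 = 0 from rfl)
    refine assemble 1 0 P (zcoord n 1 0) 1 1 (by norm_num) ?_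
      (trivEquiv _ _) (Subsingleton.elim _ _) (trivEquiv _ _) (Subsingleton.elim _ _)
    have hz : zcoord n 1 0 = 2 * (n : ℤ) - 1 := by norm_num [zcoord]
    rw [hz]
    norm_num at hP ⊢
    omega
  -- e2 = 1, e3 = 1
  · haveI := finIsEmpty (show (1:ℕ) - 1 = 0 from rfl)
    refine assemble 1 1 P (zcoord n 1 1) 1 1 (by norm_num) ?_
      (trivEquiv _ _) (Subsingleton.elim _ _) (trivEquiv _ _) (Subsingleton.elim _ _)
    have hz : zcoord n 1 1 = 6 * (n : ℤ) - 3 - 4 := by norm_num [zcoord]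
    rw [hz]
    norm_num at hP ⊢
    omega
  -- e2 = 1, e3 = a3 + 2
  · haveI := finIsEmpty (show (1:ℕ) - 1 = 0 from rfl)
    refine assemble 1 (a3 + 2) P (zcoord n 1 (a3 + 2)) 1 3 (by norm_num) ?_
      (trivEquiv _ _) (Subsingleton.elim _ _) (splitEquiv 3 a3) (splitEquiv_ones 3 a3)
    have hz : zcoord n 1 (a3 + 2) = 6 * (n : ℤ) - 3 - 4 * (a3 + 2 : ℕ) := by
      norm_num [zcoord]
    rw [hz]
    rw [show min (a3 + 2) 2 = 2 by omega] at hP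
    norm_num at hP ⊢
    omega
  -- e2 = a2 + 2, e3 = 0
  · haveI := finIsEmpty (show (0:ℕ) - 1 = 0 from rfl)
    refine assemble (a2 + 2) 0 P (zcoord n (a2 + 2) 0) 2 1 (by norm_num) ?_
      (splitEquiv 2 a2) (splitEquiv_ones 2 a2) (trivEquiv _ _) (Subsingleton.elim _ _)
    have hz : zcoord n (a2 + 2) 0 = 2 * (n : ℤ) - (a2 + 2 : ℕ) := by
      norm_num [zcoord]
    rw [hz]
    rw [show min (a2 + 2) 2 = 2 by omega] at hP
    norm_num at hP ⊢
    omega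
  -- e2 = a2 + 2, e3 = 1
  · haveI := finIsEmpty (show (1:ℕ) - 1 = 0 from rfl)
    refine assemble (a2 + 2) 1 P (zcoord n (a2 + 2) 1) 2 1 (by norm_num) ?_
      (splitEquiv 2 a2) (splitEquiv_ones 2 a2) (trivEquiv _ _) (Subsingleton.elim _ _)
    have hz : zcoord n (a2 + 2) 1 = 6 * (n : ℤ) - 3 * (a2 + 2 : ℕ) - 4 := by
      norm_num [zcoord]
    rw [hz]
    rw [show min (a2 + 2) 2 = 2 by omega] at hP
    norm_num at hP ⊢
    omega
  -- e2 = a2 + 2, e3 = a3 + 2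
  · refine assemble (a2 + 2) (a3 + 2) P (zcoord n (a2 + 2) (a3 + 2)) 2 3 (by norm_num) ?_
      (splitEquiv 2 a2) (splitEquiv_ones 2 a2) (splitEquiv 3 a3) (splitEquiv_ones 3 a3)
    have hz : zcoord n (a2 + 2) (a3 + 2)
        = 6 * (n : ℤ) - 3 * (a2 + 2 : ℕ) - 4 * (a3 + 2 : ℕ) := by
      norm_num [zcoord]
    rw [hz]
    rw [show min (a2 + 2) 2 = 2 by omega, show min (a3 + 2) 2 = 2 by omega] at hP
    norm_num at hP ⊢
    omega
end

section
/- Let $A$, $B$, $C$, $I^{\mathrm{sing}}$, $I^{\mathrm{reg}}$ be finite sets with maps $\phi: B \to A$, $\psi: B \to C$, $\lambda: I^{\mathrm{sing}} \to A$, $\theta: I^{\mathrm{reg}} \to C$. Consider the $\mathbb{Z}$-linear maps $u: \mathbb{Z}[B] \oplus \mathbb{Z}[I^{\mathrm{sing}}] \oplus \mathbb{Z}[I^{\mathrm{reg}}] \to \mathbb{Z}[C] \oplus \mathbb{Z}[A]$ given by the matrix $\begin{pmatrix} \psi & 0 & \theta \\ \phi & \lambda & 0 \end{pmatrix}$, and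 $w: \mathbb{Z}[B] \oplus \mathbb{Z}[I^{\mathrm{sing}}] \oplus \mathbb{Z}[I^{\mathrm{reg}}] \to \mathbb{Z}[C] \oplus \mathbb{Z}[A] \oplus \mathbb{Z}$ given by $\begin{pmatrix} \psi & 0 & \theta \\ -\phi & \lambda & 0 \\ 0 & -\varepsilon & -\varepsilon \end{pmatrix}$, where $\varepsilon$ denotes the augmentation sending each basis element to $1$. Then the natural projection (forgetting the last $\mathbb{Z}$-coordinate and applying the sign change on the $\mathbb{Z}[A]$-component) induces an isomorphism $\ker(w) \cong \ker(u)$. -/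
/-- The pushforward `ℤ[S] → ℤ[T]` induced by a map of finite sets `f : S → T`. -/
def indMap {S T : Type*} [Fintype S] [DecidableEq T] (f : S → T) :
    (S → ℤ) →ₗ[ℤ] (T → ℤ) :=
  Matrix.mulVecLin (Matrix.of fun t s => if f s = t then 1 else 0)

/-- The augmentation `ℤ[S] → ℤ`, sending each basis element to `1`. -/
def aug (S : Type*) [Fintype S] : (S → ℤ) →ₗ[ℤ] ℤ :=
  ∑ s : S, LinearMap.proj s


lemma aug_indMap {S T : Type*} [Fintype S] [Fintype T] [DecidableEq T] (f : S → T) (x : S → ℤ) :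
    aug T (indMap f x) = aug S x := by
  simp only [aug, indMap, LinearMap.sum_apply, LinearMap.proj_apply,
    Matrix.mulVecLin_apply, Matrix.mulVec, dotProduct, Matrix.of_apply]
  rw [Finset.sum_comm]
  simp

section
variable {A B C Is Ir : Type*} [Fintype A] [Fintype B] [Fintype C] [Fintype Is] [Fintype Ir]
  [DecidableEq A] [DecidableEq C]
  (φ : B → A) (ψ : B → C) (lam : Is → A) (θ : Ir → C)

/-- first projection `ℤ[B] ⊕ ℤ[I^sing] ⊕ ℤ[I^reg] → ℤ[B]` -/
noncomputable def pB : ((B → ℤ) × ((Is → ℤ) × (Ir → ℤ))) →ₗ[ℤ] (B → ℤ) :=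
  LinearMap.fst ℤ _ _

noncomputable def pS : ((B → ℤ) × ((Is → ℤ) × (Ir → ℤ))) →ₗ[ℤ] (Is → ℤ) :=
  (LinearMap.fst ℤ (Is → ℤ) (Ir → ℤ)).comp (LinearMap.snd ℤ (B → ℤ) _)

noncomputable def pR : ((B → ℤ) × ((Is → ℤ) × (Ir → ℤ))) →ₗ[ℤ] (Ir → ℤ) :=
  (LinearMap.snd ℤ (Is → ℤ) (Ir → ℤ)).comp (LinearMap.snd ℤ (B → ℤ) _)

/-- The map `u` with matrix `[ψ 0 θ; φ λ 0]`. -/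
noncomputable def uMap : ((B → ℤ) × ((Is → ℤ) × (Ir → ℤ))) →ₗ[ℤ] ((C → ℤ) × (A → ℤ)) :=
  LinearMap.prod ((indMap ψ).comp pB + (indMap θ).comp pR)
    ((indMap φ).comp pB + (indMap lam).comp pS)

/-- The map `w` with matrix `[ψ 0 θ; -φ λ 0; 0 -ε -ε]`, the chain differential of the
extended graph. -/
noncomputable def wMap :
    ((B → ℤ) × ((Is → ℤ) × (Ir → ℤ))) →ₗ[ℤ] ((C → ℤ) × ((A → ℤ) × ℤ)) :=
  LinearMap.prod ((indMap ψ).comp pB + (indMap θ).comp pR)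
    (LinearMap.prod (-(indMap φ).comp pB + (indMap lam).comp pS)
      (-(aug Is).comp pS - (aug Ir).comp pR))

/-- The sign-change automorphism of the common source corresponding to the projection
of targets `(c, a, t) ↦ (c, -a)` forgetting the last `ℤ`-coordinate. -/
noncomputable def signChange :
    ((B → ℤ) × ((Is → ℤ) × (Ir → ℤ))) →ₗ[ℤ] ((B → ℤ) × ((Is → ℤ) × (Ir → ℤ))) :=
  LinearMap.prod (pB) (LinearMap.prod (-(pS)) (pR))

/-- The natural comparison (forgetting the last `ℤ`-coordinate and changing signs)
induces an isomorphism `ker w ≅ ker u`: the homology of the extended graph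
`Γ̃_{Y,Σ}` is the character group of the toric part of `Pic⁰_{(Y,Σ)/k}`. -/
theorem statement_8 :
    Submodule.map (signChange (B := B) (Is := Is) (Ir := Ir))
        (LinearMap.ker (wMap φ ψ lam θ)) = LinearMap.ker (uMap φ ψ lam θ) := by
  have key : ∀ (b : B → ℤ) (s : Is → ℤ) (r : Ir → ℤ),
      (b, (s, r)) ∈ LinearMap.ker (uMap φ ψ lam θ) ↔
      (b, (-s, r)) ∈ LinearMap.ker (wMap φ ψ lam θ) := by
    intro b s r
    simp only [LinearMap.mem_ker, uMap, wMap, pB, pS, pR, LinearMap.prod_apply,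
      LinearMap.add_apply, LinearMap.neg_apply, LinearMap.sub_apply, LinearMap.comp_apply,
      LinearMap.fst_apply, LinearMap.snd_apply, Function.prod, Prod.mk_eq_zero, map_neg]
    constructor
    · rintro ⟨h1, h2⟩
      refine ⟨h1, ⟨by rw [← neg_add, h2, neg_zero], ?_⟩⟩
      have e1 := congrArg (aug C) h1
      have e2 := congrArg (aug A) h2
      simp only [map_add, aug_indMap, map_zero] at e1 e2
      simp only [neg_neg, map_neg]
      omega
    · rintro ⟨h1, h2, _⟩
      refine ⟨h1, ?_⟩
      have := congrArg Neg.neg h2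
      simp only [neg_add_rev, neg_neg, neg_zero] at this
      rw [← this]; abel
  ext ⟨b, s, r⟩
  constructor
  · rintro ⟨⟨b', s', r'⟩, hy, heq⟩
    rw [← heq]
    simp only [signChange, pB, pS, pR, LinearMap.prod_apply, Function.prod, LinearMap.neg_apply,
      LinearMap.comp_apply, LinearMap.fst_apply, LinearMap.snd_apply]
    rw [key]
    simpa using hy
  · intro hx
    refine ⟨(b, (-s, r)), (key b s r).mp hx, ?_⟩
    simp [signChange, pB, pS, pR, Function.prod]


end
end

section
/- Let $G_1, G_2, G_3$ be abelian groups fitting into an exact sequence $0 \to G_1 \to G_2 \to G_3 \to 0$, and let $H_i \subseteq G_i$ be subgroups such that the maps restrict to $H_1 \to H_2 \to H_3$, the sequence $0 \to H_1' \to H_2 \to H_3 \to 0$ is exact where $H_1' = G_1 \cap H_2$, each quotient $G_i/H_i$ is finitely generated, $H_1$ has finite index in $H_1'$, and $G_1/H_1$ is torsion-free. Then $H_1 = H_1'$, and consequently both sequences $0 \to H_1 \to H_2 \to H_3 \to 0$ and $0 \to G_1/H_1 \to G_2/H_2 \to G_3/H_3 \to 0$ are exact. -/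
/-- Group-theoretic content of Lemma 1.1(b): given `0 → A → G → G/A → 0` and
subgroups `H₁ ≤ A ∩ H₂`, `H₂ ≤ G`, `H₃ = image of H₂ in G/A` (exactness of
`0 → A ∩ H₂ → H₂ → H₃ → 0`), with all quotients `Gᵢ/Hᵢ` finitely generated, `H₁` of
finite index in `H₁' = A ∩ H₂`, and `A/H₁` torsion-free, one has `H₁ = A ∩ H₂`; and
consequently the sequences of subgroups and of quotients are exact. -/
theorem statement_16 {G : Type*} [AddCommGroup G] (A H1 H2 : AddSubgroup G)
    (H3 : AddSubgroup (G ⧸ A))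
    (hH1A : H1 ≤ A) (hH1H2 : H1 ≤ H2)
    (hH3 : H3 = AddSubgroup.map (QuotientAddGroup.mk' A) H2)
    (hfg1 : AddGroup.FG (A ⧸ H1.addSubgroupOf A))
    (hfg2 : AddGroup.FG (G ⧸ H2))
    (hfg3 : AddGroup.FG ((G ⧸ A) ⧸ H3))
    (hfin : (H1.addSubgroupOf (A ⊓ H2)).FiniteIndex)
    (htf : ∀ a ∈ A, ∀ n : ℕ, n ≠ 0 → n • a ∈ H1 → a ∈ H1) :
    H1 = A ⊓ H2 ∧
    -- exactness of `0 → G₁/H₁ → G₂/H₂ → G₃/H₃ → 0`: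
    (∀ a ∈ A, a ∈ H2 → a ∈ H1) ∧
    (∀ g : G, QuotientAddGroup.mk' A g ∈ H3 ↔ ∃ a ∈ A, ∃ h ∈ H2, g = a + h) := by
  have key : ∀ a ∈ A, a ∈ H2 → a ∈ H1 := by
    intro a ha hh
    set K := H1.addSubgroupOf (A ⊓ H2)
    have hmem : ((K.index : ℕ) • (⟨a, ha, hh⟩ : (A ⊓ H2 : AddSubgroup G)) : (A ⊓ H2 : AddSubgroup G)) ∈ K :=
      AddSubgroup.nsmul_index_mem K _
    have hmem' : (K.index : ℕ) • a ∈ H1 := by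
      simpa [K, AddSubgroup.mem_addSubgroupOf] using hmem
    exact htf a ha K.index hfin.index_ne_zero hmem'
  refine ⟨le_antisymm (le_inf hH1A hH1H2) (fun x hx => key x hx.1 hx.2), key, ?_⟩
  intro g
  subst hH3
  constructor
  · rintro ⟨h, hh, heq⟩
    have : g - h ∈ A := by
      rw [← QuotientAddGroup.eq_iff_sub_mem]
      exact (QuotientAddGroup.mk'_apply A g ▸ heq.symm) ▸ rfl
    exact ⟨g - h, this, h, hh, by abel⟩
  · rintro ⟨a, ha, h, hh, rfl⟩
    refine ⟨h, hh, ?_⟩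
    rw [QuotientAddGroup.mk'_apply, QuotientAddGroup.mk'_apply, QuotientAddGroup.eq_iff_sub_mem]
    simpa using (neg_mem ha)
end
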